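/- For every n ∈ ℕ, with k = n(n−1)/2 + n, the group T*(n,ℝ) admits an essentially free orientation-preserving affine action on ℝ^k_lex. -/

import Mathlib

/-- `Fin n → R` with the lexicographic order in which the **last** coordinate is the most
significant: `x < y` iff `x ≠ y` and `x i < y i` at the largest index `i` where `x` and `y`
differ. -/
def LexPow (R : Type*) (n : ℕ) : Type _ := Fin n → R

namespace LexPow

variable {R : Type*} {n : ℕ}

/-- The identity bijection between `Fin n → R` and `LexPow R n`. -/
def of : (Fin n → R) ≃ LexPow R n := Equiv.refl _

instance : CoeFun (LexPow R n) (fun _ => Fin n → R) := ⟨fun x => x⟩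

instance [AddCommGroup R] : AddCommGroup (LexPow R n) :=
  inferInstanceAs (AddCommGroup (Fin n → R))

/-- The map reversing coordinates, into the Mathlib lexicographic order (in which the *first*
coordinate is most significant). -/
def toRevLex (x : LexPow R n) : Lex (Fin n → R) :=
  toLex (fun i : Fin n => of.symm x (Fin.rev i))

theorem toRevLex_injective : Function.Injective (toRevLex (R := R) (n := n)) := by
  intro a b hab
  refine of.symm.injective (funext fun i => ?_)
  have h := congrFun (congrArg ofLex hab) (Fin.rev i)
  simpa [toRevLex, Fin.rev_rev] using h

noncomputable instance [LinearOrder R] : LinearOrder (LexPow R n) :=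
  LinearOrder.lift' (toRevLex (R := R) (n := n)) toRevLex_injective

instance [AddCommGroup R] [LinearOrder R] [IsOrderedAddMonoid R] :
    IsOrderedAddMonoid (LexPow R n) where
  add_le_add_left := fun a b hab c => by
    show toRevLex (a + c) ≤ toRevLex (b + c)
    have h : toRevLex a ≤ toRevLex b := hab
    exact add_le_add_left h (toRevLex c)

end LexPow

/-- An orientation-preserving affine automorphism of a linearly ordered abelian group `Λ`:
an order-preserving bijection `g` of `Λ` admitting an order-preserving group automorphism
`dilation` (the dilation factor) with `g x - g y = dilation (x - y)` for all `x, y`. -/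
structure OPAffineAut (Λ : Type*) [AddCommGroup Λ] [LinearOrder Λ] [IsOrderedAddMonoid Λ] extends Λ ≃ Λ where
  strictMono' : StrictMono toEquiv
  dilation : Λ ≃+ Λ
  dilation_strictMono : StrictMono dilation
  affine : ∀ x y : Λ, toEquiv x - toEquiv y = dilation (x - y)

namespace OPAffineAut

variable {Λ : Type*} [AddCommGroup Λ] [LinearOrder Λ] [IsOrderedAddMonoid Λ]

instance : CoeFun (OPAffineAut Λ) (fun _ => Λ → Λ) := ⟨fun f => f.toEquiv⟩

theorem ext' {f g : OPAffineAut Λ} (h : ∀ x, f x = g x) : f = g := by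
  have he : f.toEquiv = g.toEquiv := Equiv.ext h
  have hd : f.dilation = g.dilation := AddEquiv.ext fun x => by
    have hf := f.affine x 0
    have hg := g.affine x 0
    rw [sub_zero] at hf hg
    rw [← hf, ← hg]
    show f x - f 0 = g x - g 0
    rw [h x, h 0]
  cases f; cases g
  cases he; cases hd
  rfl

instance : Group (OPAffineAut Λ) where
  one :=
    { toEquiv := Equiv.refl Λ
      strictMono' := strictMono_id
      dilation := AddEquiv.refl Λ
      dilation_strictMono := strictMono_id
      affine := fun _ _ => rfl }
  mul f g :=
    { toEquiv := g.toEquiv.trans f.toEquiv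
      strictMono' := f.strictMono'.comp g.strictMono'
      dilation := g.dilation.trans f.dilation
      dilation_strictMono := f.dilation_strictMono.comp g.dilation_strictMono
      affine := fun x y => by
        simp only [Equiv.trans_apply, AddEquiv.trans_apply]
        rw [f.affine, g.affine] }
  inv f :=
    { toEquiv := f.toEquiv.symm
      strictMono' := fun a b hab => f.strictMono'.lt_iff_lt.1 (by
        simpa only [Equiv.apply_symm_apply] using hab)
      dilation := f.dilation.symm
      dilation_strictMono := fun a b hab => f.dilation_strictMono.lt_iff_lt.1 (by
        simpa only [AddEquiv.apply_symm_apply] using hab)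
      affine := fun x y => f.dilation.injective (by
        rw [AddEquiv.apply_symm_apply, ← f.affine, Equiv.apply_symm_apply,
          Equiv.apply_symm_apply]) }
  mul_assoc f g h := ext' fun _ => rfl
  one_mul f := ext' fun _ => rfl
  mul_one f := ext' fun _ => rfl
  inv_mul_cancel f := ext' fun x => f.toEquiv.symm_apply_apply x

@[simp] theorem mul_apply (f g : OPAffineAut Λ) (x : Λ) : (f * g) x = f (g x) := rfl
@[simp] theorem one_apply (x : Λ) : (1 : OPAffineAut Λ) x = x := rfl
@[simp] theorem inv_apply (f : OPAffineAut Λ) (x : Λ) : f⁻¹ x = f.toEquiv.symm x := rfl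

/-- An affine automorphism is *hyperbolic* if it has no fixed point. -/
def Hyperbolic (f : OPAffineAut Λ) : Prop := ∀ x : Λ, f x ≠ x

/-- An affine automorphism is *rigid* if for `ε = ±1`, whenever `f^ε` moves some point up,
it moves every point up. -/
def Rigid (f : OPAffineAut Λ) : Prop :=
  ∀ ε : ℤ, ε = 1 ∨ ε = -1 → (∃ x : Λ, x < (f ^ ε) x) → ∀ y : Λ, y < (f ^ ε) y

end OPAffineAut

/-- An orientation-preserving affine action (a homomorphism into the group of
orientation-preserving affine automorphisms) is *free* if every nontrivial group element
acts without fixed points. -/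
def AffineActionFree {G Λ : Type*} [Group G] [AddCommGroup Λ] [LinearOrder Λ] [IsOrderedAddMonoid Λ]
    (ρ : G →* OPAffineAut Λ) : Prop :=
  ∀ g : G, g ≠ 1 → ∀ x : Λ, ρ g x ≠ x

/-- An orientation-preserving affine action is *essentially free* if every nontrivial group
element acts as a rigid hyperbolic affine automorphism. -/
def AffineActionEssentiallyFree {G Λ : Type*} [Group G] [AddCommGroup Λ] [LinearOrder Λ] [IsOrderedAddMonoid Λ]
    (ρ : G →* OPAffineAut Λ) : Prop :=
  ∀ g : G, g ≠ 1 → (ρ g).Rigid ∧ (ρ g).Hyperbolic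

/-- `G` admits an essentially free orientation-preserving affine action on `Λ`. -/
def HasEssentiallyFreeAffineAction (G : Type*) [Group G] (Λ : Type*)
    [AddCommGroup Λ] [LinearOrder Λ] [IsOrderedAddMonoid Λ] : Prop :=
  ∃ ρ : G →* OPAffineAut Λ, AffineActionEssentiallyFree ρ

section Matrices

variable {R : Type*} {n : ℕ}

theorem diag_mul_of_triangular [CommRing R] {A B : Matrix (Fin n) (Fin n) R}
    (hA : A.BlockTriangular id) (hB : B.BlockTriangular id) (i : Fin n) :
    (A * B) i i = A i i * B i i := by
  rw [Matrix.mul_apply]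
  apply Finset.sum_eq_single i
  · intro k _ hk
    rcases lt_or_gt_of_ne hk with h | h
    · rw [hA (show (id : Fin n → Fin n) k < id i from h), zero_mul]
    · rw [hB (show (id : Fin n → Fin n) i < id k from h), mul_zero]
  · intro h; exact absurd (Finset.mem_univ i) h

/-- The group `UT(n,R)` of upper triangular `n × n` matrices over `R` with all diagonal
entries equal to `1`, realised as a subgroup of the group of units of the matrix ring. -/
def UT (n : ℕ) (R : Type*) [CommRing R] : Subgroup (Matrix (Fin n) (Fin n) R)ˣ where
  carrier := {A | (∀ i j : Fin n, j < i → (A : Matrix (Fin n) (Fin n) R) i j = 0) ∧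
    ∀ i : Fin n, (A : Matrix (Fin n) (Fin n) R) i i = 1}
  one_mem' := by
    refine ⟨fun i j hij => ?_, fun i => ?_⟩
    · simp [Matrix.one_apply, (ne_of_lt hij).symm]
    · simp
  mul_mem' := by
    rintro A B ⟨hA1, hA2⟩ ⟨hB1, hB2⟩
    have hA : (A : Matrix (Fin n) (Fin n) R).BlockTriangular id := fun i j h => hA1 i j h
    have hB : (B : Matrix (Fin n) (Fin n) R).BlockTriangular id := fun i j h => hB1 i j h
    refine ⟨fun i j hij => ?_, fun i => ?_⟩
    · exact (hA.mul hB) (show (id : Fin n → Fin n) j < id i from hij)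
    · rw [Units.val_mul, diag_mul_of_triangular hA hB, hA2, hB2, one_mul]
  inv_mem' := by
    rintro A ⟨hA1, hA2⟩
    have hA : (A : Matrix (Fin n) (Fin n) R).BlockTriangular id := fun i j h => hA1 i j h
    haveI := A.invertible
    have hAinv : ((A : Matrix (Fin n) (Fin n) R)⁻¹).BlockTriangular id :=
      Matrix.blockTriangular_inv_of_blockTriangular hA
    have hcoe : ((A⁻¹ : (Matrix (Fin n) (Fin n) R)ˣ) : Matrix (Fin n) (Fin n) R)
        = (A : Matrix (Fin n) (Fin n) R)⁻¹ := Matrix.coe_units_inv A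
    refine ⟨fun i j hij => ?_, fun i => ?_⟩
    · rw [hcoe]; exact hAinv (show (id : Fin n → Fin n) j < id i from hij)
    · have h1 : ((A : Matrix (Fin n) (Fin n) R) * (A : Matrix (Fin n) (Fin n) R)⁻¹) i i = 1 := by
        rw [Matrix.mul_inv_of_invertible]; simp
      rw [diag_mul_of_triangular hA hAinv, hA2, one_mul] at h1
      rw [hcoe, h1]

/-- The group `T*(n,R)` of upper triangular `n × n` matrices over a linearly ordered field `R`
with positive diagonal entries, realised as a subgroup of the units of the matrix ring. -/
def Tstar (n : ℕ) (R : Type*) [Field R] [LinearOrder R] [IsStrictOrderedRing R] : Subgroup (Matrix (Fin n) (Fin n) R)ˣ where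
  carrier := {A | (∀ i j : Fin n, j < i → (A : Matrix (Fin n) (Fin n) R) i j = 0) ∧
    ∀ i : Fin n, 0 < (A : Matrix (Fin n) (Fin n) R) i i}
  one_mem' := by
    refine ⟨fun i j hij => ?_, fun i => ?_⟩
    · simp [Matrix.one_apply, (ne_of_lt hij).symm]
    · simp
  mul_mem' := by
    rintro A B ⟨hA1, hA2⟩ ⟨hB1, hB2⟩
    have hA : (A : Matrix (Fin n) (Fin n) R).BlockTriangular id := fun i j h => hA1 i j h
    have hB : (B : Matrix (Fin n) (Fin n) R).BlockTriangular id := fun i j h => hB1 i j h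
    refine ⟨fun i j hij => ?_, fun i => ?_⟩
    · exact (hA.mul hB) (show (id : Fin n → Fin n) j < id i from hij)
    · rw [Units.val_mul, diag_mul_of_triangular hA hB]
      exact mul_pos (hA2 i) (hB2 i)
  inv_mem' := by
    rintro A ⟨hA1, hA2⟩
    have hA : (A : Matrix (Fin n) (Fin n) R).BlockTriangular id := fun i j h => hA1 i j h
    haveI := A.invertible
    have hAinv : ((A : Matrix (Fin n) (Fin n) R)⁻¹).BlockTriangular id :=
      Matrix.blockTriangular_inv_of_blockTriangular hA
    have hcoe : ((A⁻¹ : (Matrix (Fin n) (Fin n) R)ˣ) : Matrix (Fin n) (Fin n) R)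
        = (A : Matrix (Fin n) (Fin n) R)⁻¹ := Matrix.coe_units_inv A
    refine ⟨fun i j hij => ?_, fun i => ?_⟩
    · rw [hcoe]; exact hAinv (show (id : Fin n → Fin n) j < id i from hij)
    · have h1 : ((A : Matrix (Fin n) (Fin n) R) * (A : Matrix (Fin n) (Fin n) R)⁻¹) i i = 1 := by
        rw [Matrix.mul_inv_of_invertible]; simp
      rw [diag_mul_of_triangular hA hAinv] at h1
      rw [hcoe]
      rcases lt_trichotomy ((A : Matrix (Fin n) (Fin n) R)⁻¹ i i) 0 with h | h | h
      · exact absurd h1 (by nlinarith [hA2 i])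
      · rw [h, mul_zero] at h1; exact absurd h1 zero_ne_one
      · exact h

/-- The last index of `Fin N` (any element of `Fin N` witnesses `0 < N`). -/
def lastOf {N : ℕ} (r : Fin N) : Fin N := ⟨N - 1, Nat.sub_lt r.pos Nat.one_pos⟩

/-- A square matrix `g` (upper triangular, with positive diagonal and bottom-right entry `1`)
is *essentially hyperbolic* if `g ≠ 1` and there is a row index `r` which is not the last row
such that `(g-1)_{r,N} ≠ 0` (where `N` is the last column) and every nonzero entry of `g - 1`
lies either in a row strictly above `r`, or at position `(r, N)`. -/
def EssentiallyHyperbolic {N : ℕ} {R : Type*} [CommRing R]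
    (g : Matrix (Fin N) (Fin N) R) : Prop :=
  g ≠ 1 ∧ ∃ r : Fin N, (r : ℕ) + 1 < N ∧ (g - 1) r (lastOf r) ≠ 0 ∧
    ∀ i j : Fin N, (g - 1) i j ≠ 0 → i < r ∨ (i = r ∧ j = lastOf r)

end Matrices

/-- The group of order-preserving additive automorphisms of a linearly ordered abelian
group `Λ`, as a subgroup of `AddAut Λ`. -/
def orderAddAut (Λ : Type*) [AddCommGroup Λ] [LinearOrder Λ] [IsOrderedAddMonoid Λ] : AddSubgroup (AddAut Λ) where
  carrier := {f | StrictMono f}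
  zero_mem' := strictMono_id
  add_mem' := by
    intro f g hf hg a b hab
    exact hf (hg hab)
  neg_mem' := by
    intro f hf a b hab
    exact hf.lt_iff_lt.1 (by simpa using hab)

noncomputable section
namespace S11

abbrev P (n : ℕ) : Type := {p : Fin n × Fin n // p.1 < p.2}
instance {n} : Fintype (P n) := inferInstanceAs (Fintype {p : Fin n × Fin n // p.1 < p.2})
def I (n : ℕ) : Type := P n ⊕ Fin n
instance {n} : Fintype (I n) := inferInstanceAs (Fintype (P n ⊕ Fin n))

variable {n : ℕ}

def wt : I n → ℕ
  | .inl p => p.1.1.1 * n + (n - 1 - p.1.2.1)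
  | .inr j => n * n + j.1

theorem nat_key {a c r s m : ℕ} (hr : r < m) (hs : s < m) :
    a * m + r < c * m + s ↔ a < c ∨ (a = c ∧ r < s) := by
  constructor
  · intro h
    rcases lt_trichotomy a c with h1 | h1 | h1
    · exact Or.inl h1
    · subst h1
      exact Or.inr ⟨rfl, Nat.lt_of_add_lt_add_left h⟩
    · exfalso
      have h2 : c * m + s < a * m + r :=
        calc c * m + s < c * m + m := Nat.add_lt_add_left hs _
        _ = (c + 1) * m := by ring
        _ ≤ a * m := Nat.mul_le_mul_right m h1
        _ ≤ a * m + r := Nat.le_add_right _ _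
      exact lt_asymm h h2
  · rintro (h | ⟨rfl, h⟩)
    · calc a * m + r < a * m + m := Nat.add_lt_add_left hr _
      _ = (a + 1) * m := by ring
      _ ≤ c * m := Nat.mul_le_mul_right m h
      _ ≤ c * m + s := Nat.le_add_right _ _
    · exact Nat.add_lt_add_left h _

theorem sq_bound (a : Fin n) {r : ℕ} (hr : r < n) : a.1 * n + r < n * n :=
  calc a.1 * n + r < a.1 * n + n := Nat.add_lt_add_left hr _
  _ = (a.1 + 1) * n := by ring
  _ ≤ n * n := Nat.mul_le_mul_right n a.isLt

theorem wt_inj : Function.Injective (wt (n := n)) := by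
  rintro (⟨⟨a, b⟩, hab⟩ | j) (⟨⟨c, d⟩, hcd⟩ | l) h <;> simp only [wt] at h
  · have hb := b.isLt; have hd := d.isLt
    have hab' : (a : ℕ) < b := hab
    have hcd' : (c : ℕ) < d := hcd
    have hr : n - 1 - (b : ℕ) < n := by omega
    have hs : n - 1 - (d : ℕ) < n := by omega
    have hac : (a : ℕ) = c := by
      rcases lt_trichotomy (a : ℕ) (c : ℕ) with h1 | h1 | h1
      · exact absurd h (ne_of_lt ((nat_key hr hs).mpr (Or.inl h1)))
      · exact h1
      · exact absurd h.symm (ne_of_lt ((nat_key hs hr).mpr (Or.inl h1)))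
    rw [hac] at h
    have hbd : (b : ℕ) = d := by
      have := Nat.add_left_cancel h
      omega
    exact congrArg Sum.inl (Subtype.ext (Prod.ext (Fin.ext hac) (Fin.ext hbd)))
  · exfalso
    have hb := b.isLt
    have h2 : (a : ℕ) * n + (n - 1 - (b : ℕ)) < n * n := sq_bound a (by omega)
    omega
  · exfalso
    have hd := d.isLt
    have h2 : (c : ℕ) * n + (n - 1 - (d : ℕ)) < n * n := sq_bound c (by omega)
    omega
  · have : (j : ℕ) = l := by omega
    exact congrArg Sum.inr (Fin.ext this)

instance : LinearOrder (I n) := LinearOrder.lift' wt wt_inj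

theorem lt_iff_wt {v w : I n} : v < w ↔ wt v < wt w := Iff.rfl

theorem inl_lt_inr (p : P n) (j : Fin n) : @LT.lt (I n) _ (Sum.inl p) (Sum.inr j) := by
  refine lt_iff_wt.mpr ?_
  show p.1.1.1 * n + (n - 1 - p.1.2.1) < n * n + j.1
  have h2 := p.1.2.isLt
  have := sq_bound (n := n) p.1.1 (r := n - 1 - p.1.2.1) (by omega)
  omega

theorem inr_lt_inr {j l : Fin n} : @LT.lt (I n) _ (Sum.inr j) (Sum.inr l) ↔ j < l := by
  refine lt_iff_wt.trans ?_
  show n * n + (j : ℕ) < n * n + l ↔ _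
  rw [Fin.lt_def]
  omega

theorem inl_lt_inl {a b c d : Fin n} (h1 : a < b) (h2 : c < d) :
    @LT.lt (I n) _ (Sum.inl ⟨(a, b), h1⟩) (Sum.inl ⟨(c, d), h2⟩) ↔ a < c ∨ (a = c ∧ d < b) := by
  refine lt_iff_wt.trans ?_
  show (a : ℕ) * n + (n - 1 - (b : ℕ)) < (c : ℕ) * n + (n - 1 - (d : ℕ)) ↔ _
  have hb := b.isLt; have hd := d.isLt
  have hab : (a : ℕ) < b := h1
  have hcd : (c : ℕ) < d := h2
  rw [nat_key (by omega) (by omega)]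
  simp only [Fin.lt_def, Fin.ext_iff]
  constructor <;> (intro h; omega)

def equivSigma : P n ≃ Σ j : Fin n, Fin j.1 where
  toFun p := ⟨p.1.2, ⟨p.1.1.1, p.2⟩⟩
  invFun s := ⟨(⟨s.2.1, lt_trans s.2.isLt s.1.isLt⟩, s.1), s.2.isLt⟩
  left_inv := by rintro ⟨⟨a, b⟩, h⟩; rfl
  right_inv := by rintro ⟨j, k⟩; rfl

theorem card_P : Fintype.card (P n) = n * (n - 1) / 2 := by
  rw [Fintype.card_congr equivSigma, Fintype.card_sigma]
  simp only [Fintype.card_fin]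
  rw [show (∑ x : Fin n, (x : ℕ)) = ∑ i ∈ Finset.range n, i from
    Fin.sum_univ_eq_sum_range (fun i => i) n]
  have := Finset.sum_range_id_mul_two n
  omega

theorem card_I : Fintype.card (I n) = n * (n - 1) / 2 + n := by
  rw [show Fintype.card (I n) = Fintype.card (P n ⊕ Fin n) from rfl,
    Fintype.card_sum, Fintype.card_fin, card_P]

def eI : I n ≃o Fin (n * (n - 1) / 2 + n) :=
  (Fintype.orderIsoFinOfCardEq (I n) card_I).symm

end S11

namespace S11

variable {n : ℕ}

abbrev kk (n : ℕ) : ℕ := n * (n - 1) / 2 + n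

/-! ### LexPow order lemmas -/

theorem lexpow_zero_apply {m : ℕ} (q : Fin m) : (0 : LexPow ℝ m) q = 0 := rfl

theorem lexpow_ext {m : ℕ} {x y : LexPow ℝ m} (h : ∀ q, x q = y q) : x = y := funext h

theorem lexpow_lt_of {m : ℕ} {x y : LexPow ℝ m} (i : Fin m)
    (h1 : x i < y i) (h2 : ∀ j, i < j → x j = y j) : x < y := by
  show LexPow.toRevLex x < LexPow.toRevLex y
  refine ⟨i.rev, fun j hj => ?_, ?_⟩
  · have h3 : Fin.rev (Fin.rev i) < Fin.rev j := Fin.rev_lt_rev.mpr hj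
    rw [Fin.rev_rev] at h3
    exact h2 (Fin.rev j) h3
  · show x (Fin.rev i.rev) < y (Fin.rev i.rev)
    rw [Fin.rev_rev]
    exact h1

theorem lexpow_pos_elim {m : ℕ} {v : LexPow ℝ m} (h : 0 < v) :
    ∃ i : Fin m, 0 < v i ∧ ∀ j, i < j → v j = 0 := by
  obtain ⟨i, h1, h2⟩ := (show LexPow.toRevLex 0 < LexPow.toRevLex v from h)
  refine ⟨i.rev, h2, fun j hj => ?_⟩
  have h3 : Fin.rev j < i := by
    have h4 := Fin.rev_lt_rev.mpr hj
    rwa [Fin.rev_rev] at h4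
  have h5 : v (Fin.rev (Fin.rev j)) = (0 : LexPow ℝ m) (Fin.rev (Fin.rev j)) :=
    (h1 (Fin.rev j) h3).symm
  rw [Fin.rev_rev] at h5
  exact h5

/-! ### Matrix entries -/

def ent (g : Tstar n ℝ) : Matrix (Fin n) (Fin n) ℝ :=
  ((g : (Matrix (Fin n) (Fin n) ℝ)ˣ) : Matrix (Fin n) (Fin n) ℝ)

theorem ent_tri (g : Tstar n ℝ) {i j : Fin n} (h : j < i) : ent g i j = 0 := g.2.1 i j h
theorem ent_pos (g : Tstar n ℝ) (i : Fin n) : 0 < ent g i i := g.2.2 i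
theorem ent_ne (g : Tstar n ℝ) (i : Fin n) : ent g i i ≠ 0 := ne_of_gt (ent_pos g i)
theorem ent_mul (g h : Tstar n ℝ) : ent (g * h) = ent g * ent h := rfl
theorem ent_one : ent (1 : Tstar n ℝ) = 1 := rfl

theorem ent_diag_mul (g h : Tstar n ℝ) (j : Fin n) :
    ent (g * h) j j = ent g j j * ent h j j := by
  rw [ent_mul]
  exact diag_mul_of_triangular (fun _ _ hij => ent_tri g hij) (fun _ _ hij => ent_tri h hij) j

/-! ### The action maps -/

def Mof (x : LexPow ℝ (kk n)) (i j : Fin n) : ℝ :=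
  if h : i < j then x (eI (Sum.inl ⟨(i, j), h⟩)) else if i = j then 1 else 0

def Uof (v : LexPow ℝ (kk n)) (i j : Fin n) : ℝ :=
  if h : i < j then v (eI (Sum.inl ⟨(i, j), h⟩)) else 0

theorem Mof_lt (x : LexPow ℝ (kk n)) {i j : Fin n} (h : i < j) :
    Mof x i j = x (eI (Sum.inl ⟨(i, j), h⟩)) := dif_pos h
theorem Mof_diag (x : LexPow ℝ (kk n)) (i : Fin n) : Mof x i i = 1 := by
  rw [Mof, dif_neg (lt_irrefl i), if_pos rfl]
theorem Mof_gt (x : LexPow ℝ (kk n)) {i j : Fin n} (h : j < i) : Mof x i j = 0 := by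
  rw [Mof, dif_neg (asymm h), if_neg (ne_of_gt h)]
theorem Uof_lt (v : LexPow ℝ (kk n)) {i j : Fin n} (h : i < j) :
    Uof v i j = v (eI (Sum.inl ⟨(i, j), h⟩)) := dif_pos h
theorem Uof_ge (v : LexPow ℝ (kk n)) {i j : Fin n} (h : j ≤ i) : Uof v i j = 0 :=
  dif_neg (not_lt.mpr h)

def TI (g : Tstar n ℝ) (x : LexPow ℝ (kk n)) : I n → ℝ
  | .inl p => (∑ l, ent g p.1.1 l * Mof x l p.1.2) / ent g p.1.2 p.1.2
  | .inr j => x (eI (Sum.inr j)) + Real.log (ent g j j)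

def AI (g : Tstar n ℝ) (v : LexPow ℝ (kk n)) : I n → ℝ
  | .inl p => (∑ l, ent g p.1.1 l * Uof v l p.1.2) / ent g p.1.2 p.1.2
  | .inr j => v (eI (Sum.inr j))

def Tmap (g : Tstar n ℝ) (x : LexPow ℝ (kk n)) : LexPow ℝ (kk n) :=
  LexPow.of fun q => TI g x (eI.symm q)

def Amap (g : Tstar n ℝ) (v : LexPow ℝ (kk n)) : LexPow ℝ (kk n) :=
  LexPow.of fun q => AI g v (eI.symm q)

theorem Tmap_apply (g : Tstar n ℝ) (x : LexPow ℝ (kk n)) (q : Fin (kk n)) :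
    Tmap g x q = TI g x (eI.symm q) := rfl
theorem Amap_apply (g : Tstar n ℝ) (v : LexPow ℝ (kk n)) (q : Fin (kk n)) :
    Amap g v q = AI g v (eI.symm q) := rfl

theorem Tmap_coord (g : Tstar n ℝ) (x : LexPow ℝ (kk n)) (w : I n) :
    Tmap g x (eI w) = TI g x w := by
  rw [Tmap_apply, OrderIso.symm_apply_apply]
theorem Amap_coord (g : Tstar n ℝ) (v : LexPow ℝ (kk n)) (w : I n) :
    Amap g v (eI w) = AI g v w := by
  rw [Amap_apply, OrderIso.symm_apply_apply]

theorem Mof_Tmap (g : Tstar n ℝ) (x : LexPow ℝ (kk n)) (i j : Fin n) :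
    Mof (Tmap g x) i j = (∑ l, ent g i l * Mof x l j) / ent g j j := by
  rcases lt_trichotomy i j with h | h | h
  · rw [Mof_lt _ h]; refine (Tmap_coord _ _ _).trans ?_
    rfl
  · subst h
    rw [Mof_diag, eq_comm, div_eq_one_iff_eq (ent_ne g i)]
    rw [Finset.sum_eq_single i]
    · rw [Mof_diag, mul_one]
    · intro l _ hl
      rcases lt_or_gt_of_ne hl with h1 | h1
      · rw [ent_tri g h1, zero_mul]
      · rw [Mof_gt _ h1, mul_zero]
    · intro hmem; exact absurd (Finset.mem_univ i) hmem
  · rw [Mof_gt _ h]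
    have hz : (∑ l, ent g i l * Mof x l j) = 0 := Finset.sum_eq_zero fun l _ => by
      rcases lt_or_ge l i with h1 | h1
      · rw [ent_tri g h1, zero_mul]
      · rw [Mof_gt _ (lt_of_lt_of_le h h1), mul_zero]
    rw [hz, zero_div]

theorem Uof_Amap (g : Tstar n ℝ) (v : LexPow ℝ (kk n)) (i j : Fin n) :
    Uof (Amap g v) i j = (∑ l, ent g i l * Uof v l j) / ent g j j := by
  rcases lt_or_ge i j with h | h
  · rw [Uof_lt _ h]; refine (Amap_coord _ _ _).trans ?_
    rfl
  · rw [Uof_ge _ h]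
    have hz : (∑ l, ent g i l * Uof v l j) = 0 := Finset.sum_eq_zero fun l _ => by
      rcases lt_or_ge l i with h1 | h1
      · rw [ent_tri g h1, zero_mul]
      · rw [Uof_ge _ (le_trans h h1), mul_zero]
    rw [hz, zero_div]

theorem TI_one (x : LexPow ℝ (kk n)) (w : I n) : TI (1 : Tstar n ℝ) x w = x (eI w) := by
  cases w with
  | inl p =>
    obtain ⟨⟨i, j⟩, hij⟩ := p
    show (∑ l, ent 1 i l * Mof x l j) / ent 1 j j = _
    rw [ent_one]
    rw [Finset.sum_eq_single i]
    · rw [Mof_lt _ hij, Matrix.one_apply_eq, one_mul, Matrix.one_apply_eq, div_one]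
    · intro l _ hl
      rw [Matrix.one_apply_ne (Ne.symm hl), zero_mul]
    · intro hmem; exact absurd (Finset.mem_univ i) hmem
  | inr j =>
    show x (eI (Sum.inr j)) + Real.log (ent 1 j j) = _
    rw [ent_one, Matrix.one_apply_eq, Real.log_one, add_zero]

theorem AI_one (v : LexPow ℝ (kk n)) (w : I n) : AI (1 : Tstar n ℝ) v w = v (eI w) := by
  cases w with
  | inl p =>
    obtain ⟨⟨i, j⟩, hij⟩ := p
    show (∑ l, ent 1 i l * Uof v l j) / ent 1 j j = _
    rw [ent_one]
    rw [Finset.sum_eq_single i]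
    · rw [Uof_lt _ hij, Matrix.one_apply_eq, one_mul, Matrix.one_apply_eq, div_one]
    · intro l _ hl
      rw [Matrix.one_apply_ne (Ne.symm hl), zero_mul]
    · intro hmem; exact absurd (Finset.mem_univ i) hmem
  | inr j => rfl

theorem TI_mul (g h : Tstar n ℝ) (x : LexPow ℝ (kk n)) (w : I n) :
    TI (g * h) x w = TI g (Tmap h x) w := by
  cases w with
  | inl p =>
    obtain ⟨⟨i, j⟩, hij⟩ := p
    show (∑ l, ent (g * h) i l * Mof x l j) / ent (g * h) j j
        = (∑ l, ent g i l * Mof (Tmap h x) l j) / ent g j j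
    have key : (∑ m, ent (g * h) i m * Mof x m j)
        = ∑ l, ∑ m, ent g i l * ent h l m * Mof x m j := by
      refine Eq.trans ?_ Finset.sum_comm
      refine Finset.sum_congr rfl fun m _ => ?_
      rw [ent_mul, Matrix.mul_apply, Finset.sum_mul]
    have rhs : ∀ l, ent g i l * Mof (Tmap h x) l j
        = (∑ m, ent g i l * ent h l m * Mof x m j) / ent h j j := fun l => by
      rw [Mof_Tmap, mul_div_assoc', Finset.mul_sum]
      simp only [mul_assoc]
    rw [ent_diag_mul, key, Finset.sum_congr rfl fun l _ => rhs l, ← Finset.sum_div, div_div,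
      mul_comm (ent h j j) (ent g j j)]
  | inr j =>
    show x (eI (Sum.inr j)) + Real.log (ent (g * h) j j)
        = Tmap h x (eI (Sum.inr j)) + Real.log (ent g j j)
    refine Eq.trans ?_ (congrArg (· + Real.log (ent g j j)) (Tmap_coord h x (Sum.inr j))).symm
    show _ = x (eI (Sum.inr j)) + Real.log (ent h j j) + Real.log (ent g j j)
    rw [ent_diag_mul, Real.log_mul (ent_ne g j) (ent_ne h j)]
    ring

theorem AI_mul (g h : Tstar n ℝ) (v : LexPow ℝ (kk n)) (w : I n) :
    AI (g * h) v w = AI g (Amap h v) w := by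
  cases w with
  | inl p =>
    obtain ⟨⟨i, j⟩, hij⟩ := p
    show (∑ l, ent (g * h) i l * Uof v l j) / ent (g * h) j j
        = (∑ l, ent g i l * Uof (Amap h v) l j) / ent g j j
    have key : (∑ m, ent (g * h) i m * Uof v m j)
        = ∑ l, ∑ m, ent g i l * ent h l m * Uof v m j := by
      refine Eq.trans ?_ Finset.sum_comm
      refine Finset.sum_congr rfl fun m _ => ?_
      rw [ent_mul, Matrix.mul_apply, Finset.sum_mul]
    have rhs : ∀ l, ent g i l * Uof (Amap h v) l j
        = (∑ m, ent g i l * ent h l m * Uof v m j) / ent h j j := fun l => by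
      rw [Uof_Amap, mul_div_assoc', Finset.mul_sum]
      simp only [mul_assoc]
    rw [ent_diag_mul, key, Finset.sum_congr rfl fun l _ => rhs l, ← Finset.sum_div, div_div,
      mul_comm (ent h j j) (ent g j j)]
  | inr j =>
    show v (eI (Sum.inr j)) = Amap h v (eI (Sum.inr j))
    refine Eq.trans ?_ (Amap_coord h v (Sum.inr j)).symm
    rfl

theorem Mof_sub (x y : LexPow ℝ (kk n)) (l j : Fin n) :
    Mof x l j - Mof y l j = Uof (x - y) l j := by
  rcases lt_trichotomy l j with h | h | h
  · rw [Mof_lt _ h, Mof_lt _ h, Uof_lt _ h]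
    rfl
  · subst h
    rw [Mof_diag, Mof_diag, Uof_ge _ le_rfl, sub_self]
  · rw [Mof_gt _ h, Mof_gt _ h, Uof_ge _ (le_of_lt h), sub_self]

theorem Uof_add (v w : LexPow ℝ (kk n)) (l j : Fin n) :
    Uof (v + w) l j = Uof v l j + Uof w l j := by
  rcases lt_or_ge l j with h | h
  · rw [Uof_lt _ h, Uof_lt _ h, Uof_lt _ h]
    rfl
  · rw [Uof_ge _ h, Uof_ge _ h, Uof_ge _ h, add_zero]

theorem TI_sub (g : Tstar n ℝ) (x y : LexPow ℝ (kk n)) (w : I n) :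
    TI g x w - TI g y w = AI g (x - y) w := by
  cases w with
  | inl p =>
    obtain ⟨⟨i, j⟩, hij⟩ := p
    show (∑ l, ent g i l * Mof x l j) / ent g j j - (∑ l, ent g i l * Mof y l j) / ent g j j
        = (∑ l, ent g i l * Uof (x - y) l j) / ent g j j
    rw [div_sub_div_same, ← Finset.sum_sub_distrib]
    congr 1
    refine Finset.sum_congr rfl fun l _ => ?_
    rw [← mul_sub, Mof_sub]
  | inr j =>
    show (x (eI (Sum.inr j)) + Real.log (ent g j j))
        - (y (eI (Sum.inr j)) + Real.log (ent g j j))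
        = x (eI (Sum.inr j)) - y (eI (Sum.inr j))
    ring

theorem AI_add (g : Tstar n ℝ) (v w : LexPow ℝ (kk n)) (u : I n) :
    AI g (v + w) u = AI g v u + AI g w u := by
  cases u with
  | inl p =>
    obtain ⟨⟨i, j⟩, hij⟩ := p
    show (∑ l, ent g i l * Uof (v + w) l j) / ent g j j
        = (∑ l, ent g i l * Uof v l j) / ent g j j + (∑ l, ent g i l * Uof w l j) / ent g j j
    rw [← add_div, ← Finset.sum_add_distrib]
    congr 1
    refine Finset.sum_congr rfl fun l _ => ?_
    rw [Uof_add, mul_add]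
  | inr j => rfl

theorem Tmap_mul (g h : Tstar n ℝ) (x : LexPow ℝ (kk n)) :
    Tmap (g * h) x = Tmap g (Tmap h x) :=
  lexpow_ext fun q => TI_mul g h x (eI.symm q)

theorem Tmap_one (x : LexPow ℝ (kk n)) : Tmap (1 : Tstar n ℝ) x = x :=
  lexpow_ext fun q => by rw [Tmap_apply, TI_one, OrderIso.apply_symm_apply]

theorem Amap_mul (g h : Tstar n ℝ) (v : LexPow ℝ (kk n)) :
    Amap (g * h) v = Amap g (Amap h v) :=
  lexpow_ext fun q => AI_mul g h v (eI.symm q)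

theorem Amap_one (v : LexPow ℝ (kk n)) : Amap (1 : Tstar n ℝ) v = v :=
  lexpow_ext fun q => by rw [Amap_apply, AI_one, OrderIso.apply_symm_apply]

theorem Tmap_sub (g : Tstar n ℝ) (x y : LexPow ℝ (kk n)) :
    Tmap g x - Tmap g y = Amap g (x - y) :=
  lexpow_ext fun q => TI_sub g x y (eI.symm q)

theorem Amap_add (g : Tstar n ℝ) (v w : LexPow ℝ (kk n)) :
    Amap g (v + w) = Amap g v + Amap g w :=
  lexpow_ext fun q => AI_add g v w (eI.symm q)

end S11

namespace S11

variable {n : ℕ}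

theorem AI_pos_at (g : Tstar n ℝ) (v : LexPow ℝ (kk n)) (w : I n)
    (hv : 0 < v (eI w)) (hz : ∀ w', w < w' → v (eI w') = 0) : 0 < AI g v w := by
  cases w with
  | inl p =>
    obtain ⟨⟨a, b⟩, hab⟩ := p
    show 0 < (∑ l, ent g a l * Uof v l b) / ent g b b
    have hsum : (∑ l, ent g a l * Uof v l b)
        = ent g a a * v (eI (Sum.inl ⟨(a, b), hab⟩)) := by
      rw [Finset.sum_eq_single a]
      · rw [Uof_lt _ hab]
      · intro l _ hl
        rcases lt_or_gt_of_ne hl with h1 | h1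
        · rw [ent_tri g h1, zero_mul]
        · rcases lt_or_ge l b with h2 | h2
          · have h3 : @LT.lt (I n) _ (Sum.inl ⟨(a, b), hab⟩) (Sum.inl ⟨(l, b), h2⟩) :=
              (inl_lt_inl hab h2).mpr (Or.inl h1)
            rw [Uof_lt _ h2, hz _ h3, mul_zero]
          · rw [Uof_ge _ h2, mul_zero]
      · intro hmem; exact absurd (Finset.mem_univ a) hmem
    rw [hsum]
    exact div_pos (mul_pos (ent_pos g a) hv) (ent_pos g b)
  | inr j => exact hv

theorem AI_zero_at (g : Tstar n ℝ) (v : LexPow ℝ (kk n)) (w w' : I n) (hw : w < w')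
    (hz : ∀ u, w < u → v (eI u) = 0) : AI g v w' = 0 := by
  cases w' with
  | inl p =>
    obtain ⟨⟨c, d⟩, hcd⟩ := p
    show (∑ l, ent g c l * Uof v l d) / ent g d d = 0
    have hsum : (∑ l, ent g c l * Uof v l d) = 0 := Finset.sum_eq_zero fun l _ => by
      rcases lt_or_ge l c with h1 | h1
      · rw [ent_tri g h1, zero_mul]
      · rcases lt_or_ge l d with h2 | h2
        · have hle : @LE.le (I n) _ (Sum.inl ⟨(c, d), hcd⟩) (Sum.inl ⟨(l, d), h2⟩) := by
            rcases eq_or_lt_of_le h1 with h3 | h3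
            · exact le_of_eq (congrArg Sum.inl (Subtype.ext (Prod.ext h3 rfl)))
            · exact le_of_lt ((inl_lt_inl hcd h2).mpr (Or.inl h3))
          rw [Uof_lt _ h2, hz _ (lt_of_lt_of_le hw hle), mul_zero]
        · rw [Uof_ge _ h2, mul_zero]
    rw [hsum, zero_div]
  | inr j => exact hz _ hw

theorem Amap_pos (g : Tstar n ℝ) {v : LexPow ℝ (kk n)} (hv : 0 < v) : 0 < Amap g v := by
  obtain ⟨i, h1, h2⟩ := lexpow_pos_elim hv
  have hwi : eI (eI.symm i : I n) = i := OrderIso.apply_symm_apply _ _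
  have hz : ∀ w', (eI.symm i : I n) < w' → v (eI w') = 0 := by
    intro w' h
    refine h2 _ ?_
    rw [← hwi]
    exact eI.lt_iff_lt.mpr h
  apply lexpow_lt_of i
  · rw [lexpow_zero_apply, ← hwi, Amap_coord]
    refine AI_pos_at g v _ ?_ hz
    rw [hwi]
    exact h1
  · intro j hj
    have h3 : (eI.symm i : I n) < eI.symm j := eI.symm.lt_iff_lt.mpr hj
    have h4 : Amap g v j = 0 := by
      rw [Amap_apply]
      exact AI_zero_at g v _ _ h3 hz
    rw [lexpow_zero_apply, h4]

theorem Amap_sub (g : Tstar n ℝ) (x y : LexPow ℝ (kk n)) :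
    Amap g (x - y) = Amap g x - Amap g y := by
  have h : Amap g (x - y) + Amap g y = Amap g x := by
    rw [← Amap_add, sub_add_cancel]
  have h2 := eq_sub_of_add_eq h
  exact h2

theorem Amap_strictMono (g : Tstar n ℝ) : StrictMono (Amap g (n := n)) := by
  intro a b h
  have h1 : 0 < Amap g (b - a) := Amap_pos g (sub_pos.mpr h)
  rw [Amap_sub] at h1
  exact sub_pos.mp h1

theorem Tmap_strictMono (g : Tstar n ℝ) : StrictMono (Tmap g (n := n)) := by
  intro a b h
  have h1 : 0 < Amap g (b - a) := Amap_pos g (sub_pos.mpr h)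
  rw [← Tmap_sub] at h1
  exact sub_pos.mp h1

end S11

namespace S11

variable {n : ℕ}

set_option maxHeartbeats 1600000 in
theorem exists_const (g : Tstar n ℝ) (hg : g ≠ 1) :
    ∃ (w : I n) (c : ℝ), c ≠ 0 ∧ ∀ x : LexPow ℝ (kk n),
      (TI g x w = x (eI w) + c ∧ ∀ w', w < w' → TI g x w' = x (eI w')) := by
  have hG : ent g ≠ 1 := by
    intro h
    apply hg
    apply Subtype.ext
    apply Units.ext
    rw [show ((1 : Tstar n ℝ) : (Matrix (Fin n) (Fin n) ℝ)ˣ).val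
        = (1 : Matrix (Fin n) (Fin n) ℝ) from rfl]
    exact h
  classical
  by_cases hd : ∀ j : Fin n, ent g j j = 1
  · -- unipotent case
    have hex : ∃ p : Fin n × Fin n, p.1 < p.2 ∧ ent g p.1 p.2 ≠ 0 := by
      by_contra hcon
      push_neg at hcon
      apply hG
      ext i j
      rcases lt_trichotomy i j with h1 | h1 | h1
      · rw [hcon (i, j) h1, Matrix.one_apply_ne (ne_of_lt h1)]
      · subst h1; rw [hd, Matrix.one_apply_eq]
      · rw [ent_tri g h1, Matrix.one_apply_ne (ne_of_gt h1)]
    set s : Finset (Fin n × Fin n) :=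
      Finset.univ.filter (fun p => p.1 < p.2 ∧ ent g p.1 p.2 ≠ 0) with hs
    have hmem_s : ∀ p : Fin n × Fin n, p.1 < p.2 → ent g p.1 p.2 ≠ 0 → p ∈ s := by
      intro p h1 h2
      rw [hs]
      exact Finset.mem_filter.mpr ⟨Finset.mem_univ _, h1, h2⟩
    have hsne : s.Nonempty := by
      obtain ⟨p, h1, h2⟩ := hex
      exact ⟨p, hmem_s p h1 h2⟩
    have hne1 : (s.image Prod.fst).Nonempty := hsne.image _
    set r : Fin n := (s.image Prod.fst).max' hne1 with hr
    have hrmem : r ∈ s.image Prod.fst := Finset.max'_mem _ _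
    obtain ⟨p0, hp0s, hp0⟩ := Finset.mem_image.mp hrmem
    have hne2 : ((s.filter (fun p => p.1 = r)).image Prod.snd).Nonempty :=
      ⟨p0.2, Finset.mem_image_of_mem _ (Finset.mem_filter.mpr ⟨hp0s, hp0⟩)⟩
    set t : Fin n := ((s.filter (fun p => p.1 = r)).image Prod.snd).min' hne2 with ht
    have htmem := Finset.min'_mem _ hne2
    obtain ⟨p1, hp1, hp1t⟩ := Finset.mem_image.mp htmem
    have hp1f := Finset.mem_filter.mp hp1
    have hrt_mem : (r, t) ∈ s := by
      have hpe : p1 = (r, t) := Prod.ext hp1f.2 hp1t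
      have := hp1f.1
      rwa [hpe] at this
    have hs_spec : ∀ p ∈ s, p.1 < p.2 ∧ ent g p.1 p.2 ≠ 0 := by
      intro p hp
      rw [hs] at hp
      exact (Finset.mem_filter.mp hp).2
    obtain ⟨hrt, hGrt⟩ := hs_spec _ hrt_mem
    have hrmax : ∀ p, p ∈ s → p.1 ≤ r := fun p hp =>
      Finset.le_max' _ _ (Finset.mem_image_of_mem _ hp)
    have htmin : ∀ p, p ∈ s → p.1 = r → t ≤ p.2 := fun p hp hpr =>
      Finset.min'_le _ _ (Finset.mem_image_of_mem _ (Finset.mem_filter.mpr ⟨hp, hpr⟩))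
    have hzero : ∀ a b : Fin n, a < b → ent g a b ≠ 0 → (a ≤ r ∧ (a = r → t ≤ b)) := by
      intro a b h1 h2
      have hmem : (a, b) ∈ s := hmem_s (a, b) h1 h2
      exact ⟨hrmax _ hmem, fun h3 => htmin _ hmem h3⟩
    refine ⟨Sum.inl ⟨(r, t), hrt⟩, ent g r t, hGrt, fun x => ⟨?_, ?_⟩⟩
    · show (∑ l, ent g r l * Mof x l t) / ent g t t = _
      rw [hd t, div_one]
      have hterm : ∀ l : Fin n, ent g r l * Mof x l t
          = (if l = r then x (eI (Sum.inl ⟨(r, t), hrt⟩)) else 0)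
            + (if l = t then ent g r t else 0) := by
        intro l
        rcases lt_trichotomy l r with h1 | h1 | h1
        · rw [ent_tri g h1, zero_mul, if_neg (ne_of_lt h1),
            if_neg (ne_of_lt (lt_trans h1 hrt)), add_zero]
        · rw [h1, hd r, one_mul, Mof_lt x hrt, if_pos rfl, if_neg (ne_of_lt hrt), add_zero]
        · rcases lt_trichotomy l t with h2 | h2 | h2
          · have hz0 : ent g r l = 0 := by
              by_contra h3
              have h4 := (hzero r l h1 h3).2 rfl
              exact absurd h2 (not_lt.mpr h4)
            rw [hz0, zero_mul, if_neg (ne_of_gt h1), if_neg (ne_of_lt h2), add_zero]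
          · rw [h2, Mof_diag, mul_one, if_neg (ne_of_gt hrt), if_pos rfl, zero_add]
          · rw [Mof_gt _ h2, mul_zero, if_neg (ne_of_gt h1),
              if_neg (ne_of_gt h2), add_zero]
      rw [Finset.sum_congr rfl fun l _ => hterm l, Finset.sum_add_distrib,
        Finset.sum_ite_eq' Finset.univ r (fun _ => x (eI (Sum.inl ⟨(r, t), hrt⟩))),
        Finset.sum_ite_eq' Finset.univ t (fun _ => ent g r t),
        if_pos (Finset.mem_univ r), if_pos (Finset.mem_univ t)]
    · intro w' hww'
      cases w' with
      | inr l =>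
        show x (eI (Sum.inr l)) + Real.log (ent g l l) = _
        rw [hd l, Real.log_one, add_zero]
      | inl p =>
        obtain ⟨⟨a, b⟩, hab⟩ := p
        have hcase := (inl_lt_inl hrt hab).mp hww'
        show (∑ l, ent g a l * Mof x l b) / ent g b b = _
        rw [hd b, div_one]
        have hterm : ∀ l : Fin n, ent g a l * Mof x l b
            = if l = a then x (eI (Sum.inl ⟨(a, b), hab⟩)) else 0 := by
          intro l
          rcases lt_trichotomy l a with h1 | h1 | h1
          · rw [ent_tri g h1, zero_mul, if_neg (ne_of_lt h1)]
          · rw [h1, hd a, one_mul, Mof_lt x hab, if_pos rfl]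
          · rcases lt_or_ge l b with h2 | h2
            · have hz0 : ent g a l = 0 := by
                by_contra h3
                obtain ⟨har, himp⟩ := hzero a l h1 h3
                rcases hcase with hc | ⟨hc1, hc2⟩
                · exact absurd hc (not_lt.mpr har)
                · exact absurd (lt_trans h2 hc2) (not_lt.mpr (himp hc1.symm))
              rw [hz0, zero_mul, if_neg (ne_of_gt h1)]
            · rcases eq_or_lt_of_le h2 with h3 | h3
              · have hz0 : ent g a b = 0 := by
                  by_contra h4
                  obtain ⟨har, himp⟩ := hzero a b hab h4
                  rcases hcase with hc | ⟨hc1, hc2⟩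
                  · exact absurd hc (not_lt.mpr har)
                  · exact absurd hc2 (not_lt.mpr (himp hc1.symm))
                rw [← h3, Mof_diag, mul_one, hz0, if_neg (ne_of_gt hab)]
              · rw [Mof_gt _ h3, mul_zero, if_neg (ne_of_gt (lt_trans hab h3))]
        rw [Finset.sum_congr rfl fun l _ => hterm l,
          Finset.sum_ite_eq' Finset.univ a (fun _ => x (eI (Sum.inl ⟨(a, b), hab⟩))),
          if_pos (Finset.mem_univ a)]
  · -- diagonal case
    push_neg at hd
    set sd : Finset (Fin n) := Finset.univ.filter (fun j => ent g j j ≠ 1) with hsd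
    have hdne : sd.Nonempty := by
      obtain ⟨j, hj⟩ := hd
      exact ⟨j, by rw [hsd]; exact Finset.mem_filter.mpr ⟨Finset.mem_univ _, hj⟩⟩
    set j0 : Fin n := sd.max' hdne with hj0
    have hj0mem : j0 ∈ sd := Finset.max'_mem _ _
    have hj0ne : ent g j0 j0 ≠ 1 := by
      rw [hsd] at hj0mem
      exact (Finset.mem_filter.mp hj0mem).2
    have hc : Real.log (ent g j0 j0) ≠ 0 := by
      intro h
      rcases Real.log_eq_zero.mp h with h1 | h1 | h1
      · exact ent_ne g j0 h1
      · exact hj0ne h1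
      · linarith [ent_pos g j0]
    refine ⟨Sum.inr j0, Real.log (ent g j0 j0), hc, fun x => ⟨rfl, ?_⟩⟩
    intro w' hww'
    cases w' with
    | inl p => exact absurd (inl_lt_inr p j0) (lt_asymm hww')
    | inr l =>
      have hl : j0 < l := inr_lt_inr.mp hww'
      have hl1 : ent g l l = 1 := by
        by_contra h1
        have hmem : l ∈ sd := by
          rw [hsd]; exact Finset.mem_filter.mpr ⟨Finset.mem_univ _, h1⟩
        exact absurd hl (not_lt.mpr (Finset.le_max' _ _ hmem))
      show x (eI (Sum.inr l)) + Real.log (ent g l l) = _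
      rw [hl1, Real.log_one, add_zero]

theorem dichotomy (g : Tstar n ℝ) (hg : g ≠ 1) :
    (∀ x : LexPow ℝ (kk n), x < Tmap g x) ∨ (∀ x : LexPow ℝ (kk n), Tmap g x < x) := by
  obtain ⟨w, c, hc, H⟩ := exists_const g hg
  have habove : ∀ (x : LexPow ℝ (kk n)) (j : Fin (kk n)), eI w < j → Tmap g x j = x j := by
    intro x j hj
    have h1 : w < eI.symm j := by
      have h2 := eI.symm.lt_iff_lt.mpr hj
      rwa [OrderIso.symm_apply_apply] at h2
    rw [Tmap_apply, (H x).2 _ h1, OrderIso.apply_symm_apply]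
  rcases lt_or_gt_of_ne hc with h | h
  · right
    intro x
    apply lexpow_lt_of (eI w)
    · rw [Tmap_coord, (H x).1]
      linarith
    · exact habove x
  · left
    intro x
    apply lexpow_lt_of (eI w)
    · rw [Tmap_coord, (H x).1]
      linarith
    · intro j hj
      exact (habove x j hj).symm

set_option maxHeartbeats 1600000 in
noncomputable def act (g : Tstar n ℝ) : OPAffineAut (LexPow ℝ (kk n)) where
  toFun := Tmap g
  invFun := Tmap g⁻¹
  left_inv := fun x => by rw [← Tmap_mul, inv_mul_cancel, Tmap_one]
  right_inv := fun x => by rw [← Tmap_mul, mul_inv_cancel, Tmap_one]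
  strictMono' := Tmap_strictMono g
  dilation :=
    { toFun := Amap g
      invFun := Amap g⁻¹
      left_inv := fun v => by rw [← Amap_mul, inv_mul_cancel, Amap_one]
      right_inv := fun v => by rw [← Amap_mul, mul_inv_cancel, Amap_one]
      map_add' := Amap_add g }
  dilation_strictMono := Amap_strictMono g
  affine := fun x y => Tmap_sub g x y

set_option maxHeartbeats 1600000 in
noncomputable def rho : Tstar n ℝ →* OPAffineAut (LexPow ℝ (kk n)) where
  toFun := act
  map_one' := OPAffineAut.ext' fun x => Tmap_one x
  map_mul' := fun g h => OPAffineAut.ext' fun x => Tmap_mul g h x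

theorem rho_coe (g : Tstar n ℝ) (x : LexPow ℝ (kk n)) :
    (rho g).toEquiv x = Tmap g x := rfl

theorem rho_inv_coe (g : Tstar n ℝ) (x : LexPow ℝ (kk n)) :
    ((rho g)⁻¹).toEquiv x = Tmap g⁻¹ x := by
  rw [← map_inv (rho (n := n)) g]
  rfl

end S11

set_option maxHeartbeats 1600000 in
theorem Tstar_hasEssentiallyFreeAffineAction' (n : ℕ) :
    ∃ ρ : Tstar n ℝ →* OPAffineAut (LexPow ℝ (n * (n - 1) / 2 + n)),
      AffineActionEssentiallyFree ρ := by
  refine ⟨S11.rho, ?_⟩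
  intro g hg
  constructor
  · intro ε hε hex y
    rcases hε with rfl | rfl
    · rw [zpow_one] at hex ⊢
      simp only [S11.rho_coe] at hex ⊢
      rcases S11.dichotomy g hg with H | H
      · exact H y
      · obtain ⟨x, hx⟩ := hex
        exact absurd (H x) (asymm hx)
    · rw [zpow_neg_one] at hex ⊢
      simp only [S11.rho_inv_coe] at hex ⊢
      rcases S11.dichotomy g⁻¹ (inv_ne_one.mpr hg) with H | H
      · exact H y
      · obtain ⟨x, hx⟩ := hex
        exact absurd (H x) (asymm hx)
  · intro x
    rw [show (S11.rho g).toEquiv x = S11.Tmap g x from rfl]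
    rcases S11.dichotomy g hg with H | H
    · exact (H x).ne'
    · exact (H x).ne


end

/-- The group `T*(n,ℝ)` admits an essentially free orientation-preserving
affine action on `ℝ^k_lex` with `k = n(n-1)/2 + n`. -/
theorem Tstar_hasEssentiallyFreeAffineAction (n : ℕ) :
    ∃ ρ : Tstar n ℝ →* OPAffineAut (LexPow ℝ (n * (n - 1) / 2 + n)),
      AffineActionEssentiallyFree ρ :=
  Tstar_hasEssentiallyFreeAffineAction' n
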